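/- Softassign transition: let X be an n×n real matrix and for β > 0 define S^β_X = P_sk(exp(βX)), the Sinkhorn projection of the entrywise exponential of βX. Then for any β₁, β₂ > 0, S^{β₂}_X = P_sk( (S^{β₁}_X)^{∘(β₂/β₁)} ). -/

import Mathlib

open Matrix

/-- `P` is the Sinkhorn projection of `X`: a doubly stochastic matrix of the form
`D(r) X D(c)` with positive scaling vectors. -/
def IsSinkhornProj {n : ℕ} (X P : Matrix (Fin n) (Fin n) ℝ) : Prop :=
  ∃ r c : Fin n → ℝ, (∀ i, 0 < r i) ∧ (∀ i, 0 < c i) ∧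
    P = Matrix.diagonal r * X * Matrix.diagonal c ∧
    P ∈ doublyStochastic ℝ (Fin n)

/-- Entrywise power of a matrix. -/
noncomputable def hadamardPow {n : ℕ} (X : Matrix (Fin n) (Fin n) ℝ) (t : ℝ) :
    Matrix (Fin n) (Fin n) ℝ :=
  Matrix.of fun i j => (X i j) ^ t

/-- Entrywise exponential of `β • X`. -/
noncomputable def entryExp {n : ℕ} (β : ℝ) (X : Matrix (Fin n) (Fin n) ℝ) :
    Matrix (Fin n) (Fin n) ℝ :=
  Matrix.of fun i j => Real.exp (β * X i j)

lemma sinkhorn_unique {n : ℕ} {X P Q : Matrix (Fin n) (Fin n) ℝ}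
    (hX : ∀ i j, 0 < X i j) (hP : IsSinkhornProj X P) (hQ : IsSinkhornProj X Q) :
    P = Q := by
  rcases hP with ⟨r, c, hr, hc, hPe, hPd⟩
  rcases hQ with ⟨r', c', hr', hc', hQe, hQd⟩
  rcases Nat.eq_zero_or_pos n with hn | hn
  · subst hn; ext i; exact i.elim0
  have hne : (Finset.univ : Finset (Fin n)).Nonempty := by
    simpa [Finset.univ_nonempty_iff] using Fin.pos_iff_nonempty.mp hn
  set a : Fin n → ℝ := fun i => r' i / r i with ha
  set b : Fin n → ℝ := fun j => c' j / c j with hb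
  have hap : ∀ i, 0 < a i := fun i => div_pos (hr' i) (hr i)
  have hbp : ∀ j, 0 < b j := fun j => div_pos (hc' j) (hc j)
  have hPij : ∀ i j, P i j = r i * X i j * c j := by
    intro i j; rw [hPe, Matrix.mul_diagonal, Matrix.diagonal_mul]
  have hPpos : ∀ i j, 0 < P i j := fun i j => by
    rw [hPij]; exact mul_pos (mul_pos (hr i) (hX i j)) (hc j)
  have hQij : ∀ i j, Q i j = a i * b j * P i j := by
    intro i j
    rw [hQe, Matrix.mul_diagonal, Matrix.diagonal_mul, hPij]
    simp only [ha, hb]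
    field_simp [(hr i).ne', (hc j).ne']
  -- row sums of Q
  have hrow : ∀ i, a i * ∑ j, b j * P i j = 1 := by
    intro i
    have := sum_row_of_mem_doublyStochastic hQd i
    rw [← this, Finset.mul_sum]
    refine Finset.sum_congr rfl fun j _ => ?_
    rw [hQij]; ring
  obtain ⟨j0, -, hj0⟩ := Finset.exists_max_image Finset.univ b hne
  have hj0' : ∀ j, b j ≤ b j0 := fun j => hj0 j (Finset.mem_univ j)
  -- a i * b j0 ≥ 1
  have hkey : ∀ i, 1 ≤ a i * b j0 := by
    intro i
    have hsle : ∑ j, b j * P i j ≤ b j0 * ∑ j, P i j := by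
      rw [Finset.mul_sum]
      exact Finset.sum_le_sum fun j _ =>
        mul_le_mul_of_nonneg_right (hj0' j) (hPpos i j).le
    rw [sum_row_of_mem_doublyStochastic hPd i, mul_one] at hsle
    have hs : 0 < ∑ j, b j * P i j := Finset.sum_pos
      (fun j _ => mul_pos (hbp j) (hPpos i j)) hne
    calc 1 = a i * ∑ j, b j * P i j := (hrow i).symm
    _ ≤ a i * b j0 := mul_le_mul_of_nonneg_left hsle (hap i).le
  -- column j0 of Q
  have hcolQ := sum_col_of_mem_doublyStochastic hQd j0
  have hcolP := sum_col_of_mem_doublyStochastic hPd j0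
  have hzero : ∑ i, (a i * b j0 - 1) * P i j0 = 0 := by
    have : ∑ i, (a i * b j0 - 1) * P i j0 = (∑ i, Q i j0) - ∑ i, P i j0 := by
      rw [← Finset.sum_sub_distrib]
      exact Finset.sum_congr rfl fun i _ => by rw [hQij]; ring
    rw [this, hcolQ, hcolP, sub_self]
  have hab1 : ∀ i, a i * b j0 = 1 := by
    intro i
    have := (Finset.sum_eq_zero_iff_of_nonneg (fun i _ =>
      mul_nonneg (sub_nonneg.mpr (hkey i)) (hPpos i j0).le)).mp hzero i (Finset.mem_univ i)
    have h2 := mul_eq_zero.mp this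
    rcases h2 with h | h
    · linarith [sub_eq_zero.mp h]
    · exact absurd h (hPpos i j0).ne'
  -- b constant
  obtain ⟨i0⟩ := Fin.pos_iff_nonempty.mp hn
  have hbconst : ∀ j, b j = b j0 := by
    intro j
    by_contra hne2
    have hlt : b j < b j0 := lt_of_le_of_ne (hj0' j) hne2
    have h1 : a i0 * ∑ k, b k * P i0 k = 1 := hrow i0
    have h2 : ∑ k, b k * P i0 k < b j0 * ∑ k, P i0 k := by
      rw [Finset.mul_sum]
      refine Finset.sum_lt_sum (fun k _ => mul_le_mul_of_nonneg_right (hj0' k) (hPpos i0 k).le)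
        ⟨j, Finset.mem_univ j, mul_lt_mul_of_pos_right hlt (hPpos i0 j)⟩
    rw [sum_row_of_mem_doublyStochastic hPd i0, mul_one] at h2
    have : a i0 * ∑ k, b k * P i0 k < a i0 * b j0 :=
      mul_lt_mul_of_pos_left h2 (hap i0)
    rw [h1, hab1 i0] at this
    exact lt_irrefl 1 this
  ext i j
  rw [hQij, hbconst j, show a i * b j0 = 1 from hab1 i, one_mul]

/-- Softassign transition: with `S^β_X = P_sk(exp(βX))`, for `β₁, β₂ > 0` we have
`S^{β₂}_X = P_sk((S^{β₁}_X)^{∘(β₂/β₁)})`. -/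
theorem stmt8 {n : ℕ} (X : Matrix (Fin n) (Fin n) ℝ) (β₁ β₂ : ℝ)
    (hβ₁ : 0 < β₁) (hβ₂ : 0 < β₂)
    (S₁ S₂ Q : Matrix (Fin n) (Fin n) ℝ)
    (hS₁ : IsSinkhornProj (entryExp β₁ X) S₁)
    (hS₂ : IsSinkhornProj (entryExp β₂ X) S₂)
    (hQ : IsSinkhornProj (hadamardPow S₁ (β₂ / β₁)) Q) :
    S₂ = Q := by
  set t : ℝ := β₂ / β₁ with ht
  refine sinkhorn_unique (X := entryExp β₂ X) (fun i j => Real.exp_pos _) hS₂ ?_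
  rcases hS₁ with ⟨r, c, hr, hc, hS₁e, -⟩
  rcases hQ with ⟨r', c', hr', hc', hQe, hQd⟩
  have hS₁ij : ∀ i j, S₁ i j = r i * Real.exp (β₁ * X i j) * c j := by
    intro i j; rw [hS₁e, Matrix.mul_diagonal, Matrix.diagonal_mul]; rfl
  have hHij : ∀ i j, hadamardPow S₁ t i j
      = r i ^ t * Real.exp (β₂ * X i j) * c j ^ t := by
    intro i j
    show (S₁ i j) ^ t = _
    rw [hS₁ij]
    rw [Real.mul_rpow (mul_pos (hr i) (Real.exp_pos _)).le (hc j).le,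
      Real.mul_rpow (hr i).le (Real.exp_pos _).le, ← Real.exp_mul]
    have : β₁ * X i j * t = β₂ * X i j := by
      rw [ht]; field_simp
    rw [this]
  refine ⟨fun i => r' i * r i ^ t, fun j => c j ^ t * c' j,
    fun i => mul_pos (hr' i) (Real.rpow_pos_of_pos (hr i) t),
    fun j => mul_pos (Real.rpow_pos_of_pos (hc j) t) (hc' j), ?_, hQd⟩
  ext i j
  rw [hQe, Matrix.mul_diagonal, Matrix.diagonal_mul, Matrix.mul_diagonal,
    Matrix.diagonal_mul, hHij]
  show r' i * (r i ^ t * Real.exp (β₂ * X i j) * c j ^ t) * c' j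
    = r' i * r i ^ t * Real.exp (β₂ * X i j) * (c j ^ t * c' j)
  ring
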